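/- For each fixed β < 0 and y ≥ 0, the function t ↦ Φ((y - βt)/(σ√t)) - e^{2βy/σ²} Φ((-y - βt)/(σ√t)) is monotone decreasing in t on (0,∞), and converges as t → ∞ to 1 - e^{2βy/σ²}. -/

import Mathlib

open MeasureTheory Filter

noncomputable def stdNormalCDF (x : ℝ) : ℝ :=
  (Real.sqrt (2 * Real.pi))⁻¹ * ∫ u in Set.Iic x, Real.exp (-(u ^ 2) / 2)

lemma gauss_integrable : Integrable (fun u : ℝ => Real.exp (-(u ^ 2) / 2)) := by
  have h := integrable_exp_neg_mul_sq (b := (2⁻¹ : ℝ)) (by norm_num)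
  convert h using 2 with u
  ring_nf

lemma hasDerivAt_stdNormalCDF (x : ℝ) :
    HasDerivAt stdNormalCDF ((Real.sqrt (2 * Real.pi))⁻¹ * Real.exp (-(x ^ 2) / 2)) x := by
  have hint := gauss_integrable
  have key : ∀ z : ℝ, ∫ u in Set.Iic z, Real.exp (-(u ^ 2) / 2)
      = (∫ u in Set.Iic 0, Real.exp (-(u ^ 2) / 2)) + ∫ u in (0:ℝ)..z, Real.exp (-(u ^ 2) / 2) := by
    intro z
    have := intervalIntegral.integral_Iic_sub_Iic (f := fun u : ℝ => Real.exp (-(u ^ 2) / 2))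
      (μ := volume) (a := (0:ℝ)) (b := z) hint.integrableOn hint.integrableOn
    linarith [this]
  have h1 : HasDerivAt (fun z : ℝ => ∫ u in (0:ℝ)..z, Real.exp (-(u ^ 2) / 2))
      (Real.exp (-(x ^ 2) / 2)) x := by
    refine intervalIntegral.integral_hasDerivAt_right hint.intervalIntegrable
      ?_ (by fun_prop)
    exact (by fun_prop : Continuous fun u : ℝ => Real.exp (-(u ^ 2) / 2)).aestronglyMeasurable.stronglyMeasurableAtFilter
  have h2 : HasDerivAt (fun z : ℝ => ∫ u in Set.Iic z, Real.exp (-(u ^ 2) / 2))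
      (Real.exp (-(x ^ 2) / 2)) x := by
    have := (hasDerivAt_const x (∫ u in Set.Iic 0, Real.exp (-(u ^ 2) / 2))).add h1
    rw [zero_add] at this
    exact this.congr_of_eventuallyEq (Filter.Eventually.of_forall fun z => key z)
  exact h2.const_mul _

lemma sqrt_two_pi_pos : 0 < Real.sqrt (2 * Real.pi) :=
  Real.sqrt_pos.2 (by positivity)

lemma stdNormalCDF_tendsto : Tendsto stdNormalCDF atTop (nhds 1) := by
  have hint := gauss_integrable
  have h := MeasureTheory.tendsto_setIntegral_of_monotone (ι := ℝ)
    (s := fun x => Set.Iic x) (f := fun u : ℝ => Real.exp (-(u ^ 2) / 2))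
    (fun i => measurableSet_Iic) (fun a b hab => Set.Iic_subset_Iic.2 hab)
    (by rw [Set.iUnion_Iic]; exact hint.integrableOn)
  rw [Set.iUnion_Iic] at h
  have htot : ∫ u in (Set.univ : Set ℝ), Real.exp (-(u ^ 2) / 2) = Real.sqrt (2 * Real.pi) := by
    rw [MeasureTheory.setIntegral_univ,
      show (fun u : ℝ => Real.exp (-(u ^ 2) / 2)) = fun u : ℝ => Real.exp (-(2⁻¹:ℝ) * u ^ 2) from
        funext fun u => by rw [show -(u ^ 2) / 2 = -(2⁻¹:ℝ) * u ^ 2 by ring],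
      integral_gaussian]
    rw [show Real.pi / 2⁻¹ = 2 * Real.pi by field_simp]
  rw [htot] at h
  have := h.const_mul (Real.sqrt (2 * Real.pi))⁻¹
  have heq : (Real.sqrt (2 * Real.pi))⁻¹ * Real.sqrt (2 * Real.pi) = 1 :=
    inv_mul_cancel₀ sqrt_two_pi_pos.ne'
  rw [heq] at this
  exact this

lemma sqrt_tendsto_atTop : Tendsto Real.sqrt atTop atTop := by
  have h := tendsto_rpow_atTop (y := (1/2 : ℝ)) (by norm_num)
  exact h.congr' (Filter.Eventually.of_forall fun x => (Real.sqrt_eq_rpow x).symm)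

/-- For fixed `β < 0` and `y ≥ 0`, the RBM cdf
`t ↦ Φ((y - βt)/(σ√t)) - e^{2βy/σ²} Φ((-y - βt)/(σ√t))` is monotone decreasing in `t` on
`(0,∞)` and converges, as `t → ∞`, to the exponential stationary cdf `1 - e^{2βy/σ²}`. -/
theorem stmt3 (σ β y : ℝ) (hσ : 0 < σ) (hβ : β < 0) (hy : 0 ≤ y) :
    AntitoneOn (fun t : ℝ =>
      stdNormalCDF ((y - β * t) / (σ * Real.sqrt t))
        - Real.exp (2 * β * y / σ ^ 2) * stdNormalCDF ((-y - β * t) / (σ * Real.sqrt t)))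
      (Set.Ioi 0) ∧
    Filter.Tendsto (fun t : ℝ =>
      stdNormalCDF ((y - β * t) / (σ * Real.sqrt t))
        - Real.exp (2 * β * y / σ ^ 2) * stdNormalCDF ((-y - β * t) / (σ * Real.sqrt t)))
      Filter.atTop (nhds (1 - Real.exp (2 * β * y / σ ^ 2))) := by
  set c : ℝ := Real.exp (2 * β * y / σ ^ 2) with hc
  -- the argument functions tend to atTop
  have harg : ∀ z : ℝ, Tendsto (fun t : ℝ => (z - β * t) / (σ * Real.sqrt t)) atTop atTop := by
    intro z
    have h1 : Tendsto (fun t : ℝ => z / (σ * Real.sqrt t) + (-β / σ) * Real.sqrt t)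
        atTop atTop := by
      have ht1 : Tendsto (fun t : ℝ => z / (σ * Real.sqrt t)) atTop (nhds 0) := by
        have hst : Tendsto (fun t : ℝ => σ * Real.sqrt t) atTop atTop :=
          sqrt_tendsto_atTop.const_mul_atTop hσ
        simpa [div_eq_mul_inv] using hst.inv_tendsto_atTop.const_mul z
      have ht2 : Tendsto (fun t : ℝ => (-β / σ) * Real.sqrt t) atTop atTop :=
        sqrt_tendsto_atTop.const_mul_atTop (div_pos (neg_pos.2 hβ) hσ)
      exact ht1.add_atTop ht2
    refine h1.congr' ?_
    filter_upwards [eventually_gt_atTop (0:ℝ)] with t ht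
    have hst : 0 < Real.sqrt t := Real.sqrt_pos.2 ht
    have h2 : Real.sqrt t ^ 2 = t := Real.sq_sqrt ht.le
    field_simp
    linear_combination (-β) * h2
  have htend : Tendsto (fun t : ℝ =>
      stdNormalCDF ((y - β * t) / (σ * Real.sqrt t))
        - c * stdNormalCDF ((-y - β * t) / (σ * Real.sqrt t)))
      atTop (nhds (1 - c)) := by
    have hA := stdNormalCDF_tendsto.comp (harg y)
    have hB := stdNormalCDF_tendsto.comp (harg (-y))
    have := hA.sub (hB.const_mul c)
    simpa using this
  -- derivative computation
  have hst2π := sqrt_two_pi_pos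
  have hder : ∀ t ∈ Set.Ioi (0:ℝ),
      HasDerivAt (fun t : ℝ =>
        stdNormalCDF ((y - β * t) / (σ * Real.sqrt t))
          - c * stdNormalCDF ((-y - β * t) / (σ * Real.sqrt t)))
      ((Real.sqrt (2 * Real.pi))⁻¹ *
          Real.exp (-(((y - β * t) / (σ * Real.sqrt t)) ^ 2) / 2) *
          (((-β) * (σ * Real.sqrt t) - (y - β * t) * (σ * (1 / (2 * Real.sqrt t)))) / (σ * Real.sqrt t) ^ 2)
        - c * ((Real.sqrt (2 * Real.pi))⁻¹ *
          Real.exp (-(((-y - β * t) / (σ * Real.sqrt t)) ^ 2) / 2) *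
          (((-β) * (σ * Real.sqrt t) - (-y - β * t) * (σ * (1 / (2 * Real.sqrt t)))) / (σ * Real.sqrt t) ^ 2))) t := by
    intro t ht
    have ht' : (0:ℝ) < t := ht
    have hst : 0 < Real.sqrt t := Real.sqrt_pos.2 ht'
    have hden : σ * Real.sqrt t ≠ 0 := by positivity
    have hD : HasDerivAt (fun t : ℝ => σ * Real.sqrt t) (σ * (1 / (2 * Real.sqrt t))) t :=
      (Real.hasDerivAt_sqrt ht'.ne').const_mul σ
    have hN1 : HasDerivAt (fun t : ℝ => y - β * t) (-β) t := by
      simpa using ((hasDerivAt_id' t).const_mul β).const_sub y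
    have hN2 : HasDerivAt (fun t : ℝ => -y - β * t) (-β) t := by
      simpa using ((hasDerivAt_id' t).const_mul β).const_sub (-y)
    have hA := hN1.div hD hden
    have hB := hN2.div hD hden
    have hΦA := (hasDerivAt_stdNormalCDF ((y - β * t) / (σ * Real.sqrt t))).comp t hA
    have hΦB := (hasDerivAt_stdNormalCDF ((-y - β * t) / (σ * Real.sqrt t))).comp t hB
    have := hΦA.sub (hΦB.const_mul c)
    exact this
  have hnonpos : ∀ t ∈ Set.Ioi (0:ℝ),
      ((Real.sqrt (2 * Real.pi))⁻¹ *
          Real.exp (-(((y - β * t) / (σ * Real.sqrt t)) ^ 2) / 2) *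
          (((-β) * (σ * Real.sqrt t) - (y - β * t) * (σ * (1 / (2 * Real.sqrt t)))) / (σ * Real.sqrt t) ^ 2)
        - c * ((Real.sqrt (2 * Real.pi))⁻¹ *
          Real.exp (-(((-y - β * t) / (σ * Real.sqrt t)) ^ 2) / 2) *
          (((-β) * (σ * Real.sqrt t) - (-y - β * t) * (σ * (1 / (2 * Real.sqrt t)))) / (σ * Real.sqrt t) ^ 2))) ≤ 0 := by
    intro t ht
    have ht' : (0:ℝ) < t := ht
    have hst : 0 < Real.sqrt t := Real.sqrt_pos.2 ht'
    have h2 : Real.sqrt t ^ 2 = t := Real.sq_sqrt ht'.le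
    set φa : ℝ := (Real.sqrt (2 * Real.pi))⁻¹ *
      Real.exp (-(((y - β * t) / (σ * Real.sqrt t)) ^ 2) / 2) with hφa
    set DA : ℝ := ((-β) * (σ * Real.sqrt t) - (y - β * t) * (σ * (1 / (2 * Real.sqrt t)))) / (σ * Real.sqrt t) ^ 2 with hDA
    set DB : ℝ := ((-β) * (σ * Real.sqrt t) - (-y - β * t) * (σ * (1 / (2 * Real.sqrt t)))) / (σ * Real.sqrt t) ^ 2 with hDB
    have key1 : c * ((Real.sqrt (2 * Real.pi))⁻¹ *
        Real.exp (-(((-y - β * t) / (σ * Real.sqrt t)) ^ 2) / 2)) = φa := by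
      have hexp : 2 * β * y / σ ^ 2 + -(((-y - β * t) / (σ * Real.sqrt t)) ^ 2) / 2
          = -(((y - β * t) / (σ * Real.sqrt t)) ^ 2) / 2 := by
        rw [div_pow, div_pow, mul_pow, h2]
        field_simp
        ring
      have hkey : c * Real.exp (-(((-y - β * t) / (σ * Real.sqrt t)) ^ 2) / 2)
          = Real.exp (-(((y - β * t) / (σ * Real.sqrt t)) ^ 2) / 2) := by
        rw [hc, ← Real.exp_add, hexp]
      rw [hφa, mul_left_comm, hkey]
    have key2 : DA - DB ≤ 0 := by
      rw [hDA, hDB, div_sub_div_same]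
      apply div_nonpos_of_nonpos_of_nonneg
      · have : ((-β) * (σ * Real.sqrt t) - (y - β * t) * (σ * (1 / (2 * Real.sqrt t)))) -
            ((-β) * (σ * Real.sqrt t) - (-y - β * t) * (σ * (1 / (2 * Real.sqrt t))))
            = -(y * σ / Real.sqrt t) := by
          field_simp
          ring
        rw [this]
        have h3 : 0 ≤ y * σ / Real.sqrt t := by positivity
        linarith
      · positivity
    have hφnn : 0 ≤ φa := by rw [hφa]; positivity
    calc φa * DA - c * ((Real.sqrt (2 * Real.pi))⁻¹ *
          Real.exp (-(((-y - β * t) / (σ * Real.sqrt t)) ^ 2) / 2) * DB)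
        = φa * DA - (c * ((Real.sqrt (2 * Real.pi))⁻¹ *
          Real.exp (-(((-y - β * t) / (σ * Real.sqrt t)) ^ 2) / 2))) * DB := by ring
      _ = φa * (DA - DB) := by rw [key1]; ring
      _ ≤ φa * 0 := mul_le_mul_of_nonneg_left key2 hφnn
      _ = 0 := by ring
  constructor
  · apply antitoneOn_of_deriv_nonpos (convex_Ioi 0)
    · intro t ht
      exact (hder t ht).continuousAt.continuousWithinAt
    · intro t ht
      rw [interior_Ioi] at ht
      exact (hder t ht).differentiableAt.differentiableWithinAt
    · intro t ht
      rw [interior_Ioi] at ht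
      rw [(hder t ht).deriv]
      exact hnonpos t ht
  · exact htend
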